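/- Let ν′ > 0, d ≥ 1, and let Q be a probability measure on ℝ^{d+1} concentrated on {z : z_{d+1} = 1}. Suppose B ∈ 𝒫_{d+1} satisfies the fixed-point equation B = ∫ u_{ν′,d+1}(z′B⁻¹z) z z′ dQ(z), where u_{ν′,d+1}(s) = (ν′+d+1)/(ν′+s). Then the (d+1,d+1) entry of B equals ∫ u_{ν′,d+1}(z′B⁻¹z) dQ(z), and moreover ∫ u_{ν′,d+1}(z′B⁻¹z) dQ(z) = 1, i.e., B_{d+1,d+1} = 1. -/

import Mathlib

open Matrix MeasureTheory

/-- Cauchy–Schwarz for a real positive semidefinite quadratic form. -/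
lemma posSemidef_cauchy_schwarz {n : Type*} [Fintype n] {A : Matrix n n ℝ}
    (hA : A.PosSemidef) (x y : n → ℝ) :
    (x ⬝ᵥ A.mulVec y) ^ 2 ≤ (x ⬝ᵥ A.mulVec x) * (y ⬝ᵥ A.mulVec y) := by
  have hAt : Aᵀ = A := by
    have := hA.1
    simpa [Matrix.IsHermitian, Matrix.conjTranspose_eq_transpose_of_trivial] using this
  have hsym : ∀ u v : n → ℝ, u ⬝ᵥ A.mulVec v = v ⬝ᵥ A.mulVec u := by
    intro u v
    rw [Matrix.dotProduct_mulVec, ← Matrix.mulVec_transpose, hAt, dotProduct_comm]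
  have h : ∀ t : ℝ, 0 ≤ (y ⬝ᵥ A.mulVec y) * (t * t) + (2 * (x ⬝ᵥ A.mulVec y)) * t
      + (x ⬝ᵥ A.mulVec x) := by
    intro t
    have h0 := hA.dotProduct_mulVec_nonneg (x + t • y)
    simp only [star_trivial, Matrix.mulVec_add, Matrix.add_mulVec, Matrix.mulVec_smul,
      dotProduct_add, add_dotProduct, smul_dotProduct,
      dotProduct_smul, smul_eq_mul] at h0
    rw [hsym y x] at h0
    nlinarith [h0]
  have hd := discrim_le_zero h
  rw [discrim] at hd
  nlinarith [hd]

/-- Theorem 12(b): if `Q` lives on `{z : z_{d+1} = 1}` and `B ∈ 𝒫_{d+1}` satisfies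
the fixed-point equation `B = ∫ u(z'B⁻¹z) zz' dQ(z)` with
`u(s) = (ν'+d+1)/(ν'+s)`, then `B_{d+1,d+1} = ∫ u(z'B⁻¹z) dQ(z) = 1`. -/
theorem fixedPoint_last_entry_one {d : ℕ} {ν' : ℝ} (hν' : 0 < ν')
    (Q : Measure (Fin d ⊕ Unit → ℝ)) [IsProbabilityMeasure Q]
    (hconc : Q {z | z (Sum.inr ()) = 1} = 1)
    (B : Matrix (Fin d ⊕ Unit) (Fin d ⊕ Unit) ℝ) (hB : B.PosDef)
    (hfix : ∀ i j, B i j =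
      ∫ z, (ν' + d + 1) / (ν' + z ⬝ᵥ B⁻¹.mulVec z) * (z i * z j) ∂Q) :
    B (Sum.inr ()) (Sum.inr ()) =
      ∫ z, (ν' + d + 1) / (ν' + z ⬝ᵥ B⁻¹.mulVec z) ∂Q ∧
    ∫ z, (ν' + d + 1) / (ν' + z ⬝ᵥ B⁻¹.mulVec z) ∂Q = 1 := by
  have hBdet : IsUnit B.det := isUnit_iff_ne_zero.mpr hB.det_pos.ne'
  have hAB : B⁻¹ * B = 1 := Matrix.nonsing_inv_mul B hBdet
  have hAinv : B⁻¹.PosDef := hB.inv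
  have hBt : Bᵀ = B := by
    have := hB.1
    simpa [Matrix.IsHermitian, Matrix.conjTranspose_eq_transpose_of_trivial] using this
  have hAt : B⁻¹ᵀ = B⁻¹ := by
    rw [Matrix.transpose_nonsing_inv, hBt]
  have hicm : ∀ (r : ℝ) (f : (Fin d ⊕ Unit → ℝ) → ℝ),
      ∫ z, r * f z ∂Q = r * ∫ z, f z ∂Q := fun r f => by
    simpa [smul_eq_mul] using integral_smul r f
  have hP : (0:ℝ) < ν' + d + 1 := by positivity
  have hs0 : ∀ z : Fin d ⊕ Unit → ℝ, 0 ≤ z ⬝ᵥ B⁻¹.mulVec z := by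
    intro z
    simpa using hAinv.posSemidef.dotProduct_mulVec_nonneg z
  have hq : ∀ z : Fin d ⊕ Unit → ℝ, 0 < ν' + z ⬝ᵥ B⁻¹.mulVec z := fun z =>
    add_pos_of_pos_of_nonneg hν' (hs0 z)
  -- Cauchy–Schwarz consequence: (z i)^2 ≤ B i i * (z ⬝ᵥ B⁻¹ z)
  have key : ∀ (z : Fin d ⊕ Unit → ℝ) (i : Fin d ⊕ Unit),
      (z i) ^ 2 ≤ B i i * (z ⬝ᵥ B⁻¹.mulVec z) := by
    intro z i
    have hcs := posSemidef_cauchy_schwarz hAinv.posSemidef (B.mulVec (Pi.single i 1)) z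
    have h1 : (B.mulVec (Pi.single i 1)) ⬝ᵥ B⁻¹.mulVec z = z i := by
      rw [Matrix.dotProduct_mulVec, ← Matrix.mulVec_transpose, hAt,
        Matrix.mulVec_mulVec, hAB, Matrix.one_mulVec, single_dotProduct, one_mul]
    have h2 : (B.mulVec (Pi.single i 1)) ⬝ᵥ B⁻¹.mulVec (B.mulVec (Pi.single i 1)) = B i i := by
      rw [Matrix.mulVec_mulVec, hAB, Matrix.one_mulVec, dotProduct_single, mul_one]
      simp [Matrix.mulVec_single]
    rw [h1, h2] at hcs
    exact hcs
  have hBdiag : ∀ i, 0 ≤ B i i := by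
    intro i
    have h0 := hB.posSemidef.dotProduct_mulVec_nonneg (Pi.single i 1)
    simp only [star_trivial, single_dotProduct, one_mul] at h0
    simpa [Matrix.mulVec_single, mul_one] using h0
  -- continuity / measurability
  have hcont_s : Continuous fun z : Fin d ⊕ Unit → ℝ => z ⬝ᵥ B⁻¹.mulVec z := by
    simp only [dotProduct, Matrix.mulVec]
    exact continuous_finset_sum _ fun i _ =>
      (continuous_apply i).mul (continuous_finset_sum _ fun j _ =>
        continuous_const.mul (continuous_apply j))
  have hcont_u : Continuous fun z : Fin d ⊕ Unit → ℝ =>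
      (ν' + d + 1) / (ν' + z ⬝ᵥ B⁻¹.mulVec z) :=
    continuous_const.div (continuous_const.add hcont_s) fun z => (hq z).ne'
  have hu_nonneg : ∀ z : Fin d ⊕ Unit → ℝ,
      0 ≤ (ν' + d + 1) / (ν' + z ⬝ᵥ B⁻¹.mulVec z) := fun z =>
    div_nonneg hP.le (hq z).le
  have hu_int : Integrable (fun z : Fin d ⊕ Unit → ℝ =>
      (ν' + d + 1) / (ν' + z ⬝ᵥ B⁻¹.mulVec z)) Q := by
    refine (integrable_const ((ν' + d + 1) / ν')).mono'
      hcont_u.aestronglyMeasurable (ae_of_all _ fun z => ?_)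
    rw [Real.norm_eq_abs, abs_of_nonneg (hu_nonneg z)]
    exact div_le_div_of_nonneg_left hP.le hν' (le_add_of_nonneg_right (hs0 z))
  -- integrability of the integrand in the fixed-point equation
  have hf_int : ∀ i j : Fin d ⊕ Unit, Integrable (fun z : Fin d ⊕ Unit → ℝ =>
      (ν' + d + 1) / (ν' + z ⬝ᵥ B⁻¹.mulVec z) * (z i * z j)) Q := by
    intro i j
    refine (integrable_const ((ν' + d + 1) * ((B i i + B j j) / 2))).mono'
      (hcont_u.mul ((continuous_apply i).mul (continuous_apply j))).aestronglyMeasurable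
      (ae_of_all _ fun z => ?_)
    rw [Real.norm_eq_abs, abs_mul, abs_of_nonneg (hu_nonneg z), div_mul_eq_mul_div,
      div_le_iff₀ (hq z)]
    have hab : |z i * z j| ≤ ((z i) ^ 2 + (z j) ^ 2) / 2 := by
      rw [abs_mul]
      nlinarith [sq_nonneg (|z i| - |z j|), sq_abs (z i), sq_abs (z j),
        abs_nonneg (z i), abs_nonneg (z j)]
    nlinarith [key z i, key z j, hs0 z, hBdiag i, hBdiag j,
      mul_le_mul_of_nonneg_left hab hP.le,
      mul_nonneg (mul_nonneg hP.le (add_nonneg (hBdiag i) (hBdiag j))) hν'.le]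
  -- trace identity
  have htr : ∑ i, ∑ j, B⁻¹ i j * B j i = ((d:ℝ) + 1) := by
    have h1 : ∑ i, ∑ j, B⁻¹ i j * B j i = Matrix.trace (B⁻¹ * B) := by
      simp [Matrix.trace, Matrix.diag, Matrix.mul_apply]
    rw [h1, hAB, Matrix.trace_one]
    simp [Fintype.card_sum]
  have hsum : ((d:ℝ) + 1) =
      ∫ z, (ν' + d + 1) / (ν' + z ⬝ᵥ B⁻¹.mulVec z) * (z ⬝ᵥ B⁻¹.mulVec z) ∂Q := by
    rw [← htr]
    calc ∑ i, ∑ j, B⁻¹ i j * B j i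
        = ∑ i, ∑ j, ∫ z, B⁻¹ i j *
            ((ν' + d + 1) / (ν' + z ⬝ᵥ B⁻¹.mulVec z) * (z j * z i)) ∂Q := by
          refine Finset.sum_congr rfl fun i _ => Finset.sum_congr rfl fun j _ => ?_
          rw [hfix j i, hicm]
      _ = ∑ i, ∫ z, ∑ j, B⁻¹ i j *
            ((ν' + d + 1) / (ν' + z ⬝ᵥ B⁻¹.mulVec z) * (z j * z i)) ∂Q := by
          refine Finset.sum_congr rfl fun i _ => ?_
          rw [← integral_finset_sum _ fun j _ => (hf_int j i).const_mul _]
      _ = ∫ z, ∑ i, ∑ j, B⁻¹ i j *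
            ((ν' + d + 1) / (ν' + z ⬝ᵥ B⁻¹.mulVec z) * (z j * z i)) ∂Q := by
          exact (integral_finset_sum _ fun i _ =>
            integrable_finset_sum _ fun j _ => (hf_int j i).const_mul _).symm
      _ = ∫ z, (ν' + d + 1) / (ν' + z ⬝ᵥ B⁻¹.mulVec z) * (z ⬝ᵥ B⁻¹.mulVec z) ∂Q := by
          refine integral_congr_ae (ae_of_all _ fun z => ?_)
          simp only [dotProduct, Matrix.mulVec, Finset.mul_sum]
          refine Finset.sum_congr rfl fun i _ => Finset.sum_congr rfl fun j _ => ?_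
          ring
  -- pointwise identity u(s)·s = (ν'+d+1) - ν'·u(s)
  have hid : ∀ z : Fin d ⊕ Unit → ℝ,
      (ν' + d + 1) / (ν' + z ⬝ᵥ B⁻¹.mulVec z) * (z ⬝ᵥ B⁻¹.mulVec z)
        = (ν' + d + 1) - ν' * ((ν' + d + 1) / (ν' + z ⬝ᵥ B⁻¹.mulVec z)) := by
    intro z
    have h := div_mul_cancel₀ (ν' + (d:ℝ) + 1) (hq z).ne'
    have h2 : (ν' + (d:ℝ) + 1) / (ν' + z ⬝ᵥ B⁻¹.mulVec z) * (ν' + z ⬝ᵥ B⁻¹.mulVec z)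
        = (ν' + (d:ℝ) + 1) / (ν' + z ⬝ᵥ B⁻¹.mulVec z) * ν'
          + (ν' + (d:ℝ) + 1) / (ν' + z ⬝ᵥ B⁻¹.mulVec z) * (z ⬝ᵥ B⁻¹.mulVec z) := by ring
    nlinarith [h, h2]
  have hsum2 : ((d:ℝ) + 1) = (ν' + d + 1)
      - ν' * ∫ z, (ν' + d + 1) / (ν' + z ⬝ᵥ B⁻¹.mulVec z) ∂Q := by
    rw [hsum]
    rw [integral_congr_ae (ae_of_all _ hid), integral_sub (integrable_const _)
      (hu_int.const_mul ν'), integral_const, hicm]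
    simp
  have hI : ∫ z, (ν' + d + 1) / (ν' + z ⬝ᵥ B⁻¹.mulVec z) ∂Q = 1 := by
    have h' : ν' * ∫ z, (ν' + d + 1) / (ν' + z ⬝ᵥ B⁻¹.mulVec z) ∂Q = ν' * 1 := by
      linarith
    exact mul_left_cancel₀ hν'.ne' h'
  refine ⟨?_, hI⟩
  have hae : ∀ᵐ z ∂Q, z (Sum.inr ()) = 1 := by
    have hsm : MeasurableSet {z : Fin d ⊕ Unit → ℝ | z (Sum.inr ()) = 1} :=
      measurableSet_eq_fun (measurable_pi_apply _) measurable_const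
    rw [ae_iff]
    have hc := measure_compl hsm (measure_ne_top Q _)
    rw [hconc, measure_univ, tsub_self] at hc
    simpa [Set.compl_setOf] using hc
  rw [hfix]
  refine integral_congr_ae ?_
  filter_upwards [hae] with z hz
  rw [hz]
  ring
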